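/- Let S ⊆ V(G) be a separator of G such that for every component C associated with S there exist pairwise disjoint sets {B_u}_{u ∈ S} of vertices of V(G) \ C with each B_u connected in G, u ∈ B_u for each u ∈ S, and for every pair of distinct u, v ∈ S some edge of G joins a vertex of B_u to a vertex of B_v (i.e., the subgraph of G induced by V(G) \ C contains a clique on S as a labelled minor). Let G' be the graph obtained from G by adding all edges between pairs of distinct non-adjacent vertices of S. Then tw(G') = tw(G), i.e., S is a safe separator of G. -/

import Mathlib

namespace TW

variable {V : Type} [Finite V]

/-- The open neighborhood of a vertex set `U`: vertices outside `U`
adjacent to some vertex of `U`. -/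
def nbhd (G : SimpleGraph V) (U : Set V) : Set V :=
  {v | v ∉ U ∧ ∃ u ∈ U, G.Adj u v}

/-- The closed neighborhood `N[U] = U ∪ N(U)`. -/
def nbhdClosed (G : SimpleGraph V) (U : Set V) : Set V :=
  U ∪ nbhd G U

/-- A set `C` is connected in `G` if the induced subgraph `G[C]` is connected. -/
def SetConnected (G : SimpleGraph V) (C : Set V) : Prop :=
  (G.induce C).Connected

/-- `C` is a component associated with `S`: a connected component of the
subgraph of `G` induced by the complement of `S`. -/
def IsCompAssoc (G : SimpleGraph V) (S C : Set V) : Prop :=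
  SetConnected G C ∧ Disjoint C S ∧ nbhd G C ⊆ S

/-- `C` is a full component associated with `S`. -/
def IsFullComp (G : SimpleGraph V) (S C : Set V) : Prop :=
  IsCompAssoc G S C ∧ nbhd G C = S

/-- `S` is a minimal separator: at least two full components are associated with `S`. -/
def MinimalSeparator (G : SimpleGraph V) (S : Set V) : Prop :=
  ∃ C D : Set V, IsFullComp G S C ∧ IsFullComp G S D ∧ C ≠ D

/-- The number of connected components of the subgraph induced by the complement of `S`. -/
noncomputable def numComponents (G : SimpleGraph V) (S : Set V) : ℕ :=
  Nat.card (G.induce (Sᶜ : Set V)).ConnectedComponent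

/-- `S` is a separator of `G`: removing `S` increases the number of connected
components of `G`. -/
def Separator (G : SimpleGraph V) (S : Set V) : Prop :=
  numComponents G (∅ : Set V) < numComponents G S

/-- `S` is cliquish: every two distinct vertices of `S` are adjacent or lie in
the neighborhood of a common component associated with `S`. -/
def Cliquish (G : SimpleGraph V) (S : Set V) : Prop :=
  ∀ u ∈ S, ∀ v ∈ S, u ≠ v →
    G.Adj u v ∨ ∃ C, IsCompAssoc G S C ∧ u ∈ nbhd G C ∧ v ∈ nbhd G C

/-- A graph is chordal if every induced cycle has length exactly three. -/
def IsChordal {W : Type} (H : SimpleGraph W) : Prop :=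
  ∀ ⦃v : W⦄ (w : H.Walk v v), w.IsCycle →
    (∀ x ∈ w.support, ∀ y ∈ w.support, H.Adj x y → s(x, y) ∈ w.edges) →
    w.length = 3

/-- `H` is a minimal chordal completion of `G`. -/
def MinChordalCompletion {W : Type} (G H : SimpleGraph W) : Prop :=
  G ≤ H ∧ IsChordal H ∧ ∀ H' : SimpleGraph W, G ≤ H' → H' ≤ H → IsChordal H' → H' = H

/-- `Ω` is a potential maximal clique of `G`: a clique in some minimal chordal
completion of `G`. -/
def PMC {W : Type} (G : SimpleGraph W) (Ω : Set W) : Prop :=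
  ∃ H : SimpleGraph W, MinChordalCompletion G H ∧ H.IsClique Ω

/-- A tree-decomposition of `G`. -/
structure TreeDecomp {W : Type} (G : SimpleGraph W) where
  ι : Type
  tree : SimpleGraph ι
  isTree : tree.IsTree
  bag : ι → Set W
  bag_cover : ∀ v : W, ∃ i, v ∈ bag i
  bag_edge : ∀ ⦃u v : W⦄, G.Adj u v → ∃ i, u ∈ bag i ∧ v ∈ bag i
  bag_conn : ∀ v : W, (tree.induce {i | v ∈ bag i}).Connected

/-- The width of a tree-decomposition: maximum bag size minus one. -/
noncomputable def TreeDecomp.width {W : Type} {G : SimpleGraph W} (td : TreeDecomp G) : ℕ :=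
  (⨆ i, (td.bag i).ncard) - 1

/-- The treewidth of `G`: the minimum width over all tree-decompositions. -/
noncomputable def treewidth {W : Type} (G : SimpleGraph W) : ℕ :=
  ⨅ td : TreeDecomp G, td.width

/-- The graph on `V` whose edges are all pairs of distinct vertices of `S`. -/
def cliqueOn {W : Type} (S : Set W) : SimpleGraph W where
  Adj u v := u ≠ v ∧ u ∈ S ∧ v ∈ S
  symm := ⟨by rintro u v ⟨h, hu, hv⟩; exact ⟨h.symm, hv, hu⟩⟩
  loopless := ⟨by rintro u ⟨h, _, _⟩; exact h rfl⟩

/-- `G⟨C⟩`: the graph on `N[C]` obtained from `G[N[C]]` by completing `N(C)` into a clique. -/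
def gAngle (G : SimpleGraph V) (C : Set V) : SimpleGraph ↥(nbhdClosed G C) :=
  (G ⊔ cliqueOn (nbhd G C)).induce (nbhdClosed G C)

/-- A connected set `C` is feasible if `tw(G⟨C⟩) ≤ k`. -/
def Feasible (G : SimpleGraph V) (k : ℕ) (C : Set V) : Prop :=
  treewidth (gAngle G C) ≤ k

/-- `crib S K`: the union of `K \ S` and all components associated with `K`
that are unconfined to `S` (i.e. whose neighborhood is not contained in `S`). -/
def crib (G : SimpleGraph V) (S K : Set V) : Set V :=
  (K \ S) ∪ ⋃ C ∈ {C : Set V | IsCompAssoc G K C ∧ ¬ nbhd G C ⊆ S}, C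

section Order

variable [LinearOrder V]

/-- The minimum element of a nonempty subset of a finite linear order. -/
noncomputable def setMin (U : Set V) (hU : U.Nonempty) : V :=
  wellFounded_lt.min U hU

/-- `U ≺ W`: `min U < min W` (for nonempty sets `U`, `W`). -/
def SetPrec (U W : Set V) : Prop :=
  ∃ (hU : U.Nonempty) (hW : W.Nonempty), setMin U hU < setMin W hW

/-- A connected set `C` is inbound if some full component `A` associated with
`N(C)` satisfies `A ≺ C`. -/
def Inbound (G : SimpleGraph V) (C : Set V) : Prop :=
  SetConnected G C ∧ ∃ A, IsFullComp G (nbhd G C) A ∧ SetPrec A C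

/-- A connected set is outbound if it is not inbound. -/
def Outbound (G : SimpleGraph V) (C : Set V) : Prop :=
  SetConnected G C ∧ ¬ ∃ A, IsFullComp G (nbhd G C) A ∧ SetPrec A C

open Classical in
/-- The outlet of `K`: `∅` if no non-full outbound component is associated with `K`;
otherwise `N(A)` for a non-full outbound component `A` associated with `K`
with `N(A)` maximal. -/
noncomputable def outlet (G : SimpleGraph V) (K : Set V) : Set V :=
  if h : ∃ A, IsCompAssoc G K A ∧ nbhd G A ≠ K ∧ Outbound G A ∧
      ∀ A', IsCompAssoc G K A' → nbhd G A' ≠ K → Outbound G A' →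
        ¬ nbhd G A ⊂ nbhd G A'
  then nbhd G h.choose
  else ∅

/-- `support K`: the components associated with `K` that are unconfined to `outlet K`. -/
def support (G : SimpleGraph V) (K : Set V) : Set (Set V) :=
  {C | IsCompAssoc G K C ∧ ¬ nbhd G C ⊆ outlet G K}

/-- An O-block `(N(A), A)` (with `A` outbound and `|N(A)| ≤ k`) is feasible if
`N(A) = ⋃_{C ∈ 𝒞} N(C)` for some set `𝒞` of feasible inbound connected sets. -/
def FeasibleOBlock (G : SimpleGraph V) (k : ℕ) (A : Set V) : Prop :=
  Outbound G A ∧ (nbhd G A).ncard ≤ k ∧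
    ∃ 𝒞 : Set (Set V), (∀ C ∈ 𝒞, Inbound G C ∧ Feasible G k C) ∧
      nbhd G A = ⋃ C ∈ 𝒞, nbhd G C

/-- A potential maximal clique `Ω` is buildable. -/
def Buildable (G : SimpleGraph V) (k : ℕ) (Ω : Set V) : Prop :=
  Ω.ncard ≤ k + 1 ∧
    ((∃ v : V, Ω = nbhdClosed G {v}) ∨
     (∃ 𝒞 ⊆ support G Ω, (∀ C ∈ 𝒞, Feasible G k C) ∧ Ω = ⋃ C ∈ 𝒞, nbhd G C) ∨
     (∃ A, FeasibleOBlock G k A ∧ ∃ v ∈ nbhd G A, Ω = nbhd G A ∪ (G.neighborSet v ∩ A)))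

end Order


section SafeSepAux

open SimpleGraph

/-! ### Walk-based connectivity of vertex sets -/

/-- Walk-based connectivity of a set of vertices. -/
def WConn {ι : Type*} (G : SimpleGraph ι) (A : Set ι) : Prop :=
  A.Nonempty ∧ ∀ a ∈ A, ∀ b ∈ A, ∃ w : G.Walk a b, ∀ x ∈ w.support, x ∈ A

lemma reachable_induce_of_walk {ι : Type*} (G : SimpleGraph ι) (A : Set ι) :
    ∀ {a b : ι} (w : G.Walk a b) (hw : ∀ x ∈ w.support, x ∈ A),
      (G.induce A).Reachable ⟨a, hw a w.start_mem_support⟩ ⟨b, hw b w.end_mem_support⟩ := by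
  intro a b w
  induction w with
  | nil => intro hw; rfl
  | cons h p ih =>
    intro hw
    have hw' : ∀ x ∈ p.support, x ∈ A := fun x hx => hw x (by simp [hx])
    exact Reachable.trans (Adj.reachable (by exact h)) (ih hw')

lemma induce_connected_iff_wconn {ι : Type*} (G : SimpleGraph ι) (A : Set ι) :
    (G.induce A).Connected ↔ WConn G A := by
  constructor
  · intro hc
    obtain ⟨⟨a0, ha0⟩⟩ := hc.nonempty
    refine ⟨⟨a0, ha0⟩, ?_⟩
    intro a ha b hb
    obtain ⟨w⟩ := hc.preconnected ⟨a, ha⟩ ⟨b, hb⟩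
    refine ⟨w.map ⟨Subtype.val, fun h => h⟩, ?_⟩
    intro x hx
    rw [Walk.support_map, List.mem_map] at hx
    obtain ⟨⟨y, hy⟩, -, rfl⟩ := hx
    exact hy
  · rintro ⟨⟨a0, ha0⟩, h⟩
    haveI : Nonempty (A : Set ι) := ⟨⟨a0, ha0⟩⟩
    refine Connected.mk ?_
    rintro ⟨a, ha⟩ ⟨b, hb⟩
    obtain ⟨w, hw⟩ := h a ha b hb
    exact reachable_induce_of_walk G A w hw

/-! ### Paths in trees; Helly property for subtrees -/

lemma tree_path_unique {ι : Type*} {T : SimpleGraph ι} (hT : T.IsTree) {a b : ι}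
    (p q : T.Walk a b) (hp : p.IsPath) (hq : q.IsPath) : p = q :=
  ExistsUnique.unique (hT.existsUnique_path a b) hp hq

lemma wconn_path {ι : Type*} {T : SimpleGraph ι} {A : Set ι} (hA : WConn T A) {a b : ι}
    (ha : a ∈ A) (hb : b ∈ A) :
    ∃ p : T.Walk a b, p.IsPath ∧ ∀ x ∈ p.support, x ∈ A := by
  classical
  obtain ⟨w, hw⟩ := hA.2 a ha b hb
  exact ⟨w.bypass, w.bypass_isPath, fun x hx => hw x (w.support_bypass_subset hx)⟩

/-- Decompose a walk at the last vertex belonging to `R`. -/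
lemma walk_last_in_set {ι : Type*} {T : SimpleGraph ι} {R : Set ι} :
    ∀ {a b : ι} (w : T.Walk a b), (∃ x ∈ w.support, x ∈ R) →
      ∃ m, m ∈ R ∧ ∃ (w1 : T.Walk a m) (w2 : T.Walk m b),
        w = w1.append w2 ∧ ∀ x ∈ w2.support, x ∈ R → x = m := by
  intro a b w
  induction w with
  | nil =>
    rintro ⟨x, hx, hxR⟩
    simp only [Walk.support_nil, List.mem_singleton] at hx
    subst hx
    exact ⟨x, hxR, Walk.nil, Walk.nil, rfl, by simp⟩
  | @cons a c b h p ih =>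
    intro hex
    by_cases h' : ∃ x ∈ p.support, x ∈ R
    · obtain ⟨m, hm, w1, w2, rfl, hlast⟩ := ih h'
      exact ⟨m, hm, Walk.cons h w1, w2, by rw [Walk.cons_append], hlast⟩
    · obtain ⟨x, hx, hxR⟩ := hex
      rw [Walk.support_cons, List.mem_cons] at hx
      rcases hx with rfl | hx
      · refine ⟨x, hxR, Walk.nil, Walk.cons h p, by simp, ?_⟩
        intro y hy hyR
        rw [Walk.support_cons, List.mem_cons] at hy
        rcases hy with rfl | hy
        · rfl
        · exact absurd ⟨y, hy, hyR⟩ h'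
      · exact absurd ⟨x, hx, hxR⟩ h'

/-- Median: the three paths joining three vertices of a tree share a vertex. -/
lemma tree_median {ι : Type*} {T : SimpleGraph ι} (hT : T.IsTree) {a b c : ι}
    (p : T.Walk a b) (q : T.Walk b c)
    (r : T.Walk a c) (hp : p.IsPath) (hq : q.IsPath) (hr : r.IsPath) :
    ∃ m, m ∈ p.support ∧ m ∈ q.support ∧ m ∈ r.support := by
  classical
  obtain ⟨m, hmR, w1, w2, hsplit, hlast⟩ :=
    walk_last_in_set (R := {x | x ∈ r.support}) (w := p)
      ⟨a, p.start_mem_support, r.start_mem_support⟩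
  have hm_p : m ∈ p.support := by
    rw [hsplit, Walk.mem_support_append_iff]; exact Or.inl w1.end_mem_support
  have hw2path : w2.IsPath := by
    rw [hsplit] at hp
    exact hp.of_append_right
  set d : T.Walk m c := r.dropUntil m hmR with hd_def
  have hdpath : d.IsPath := hr.dropUntil hmR
  have hdsub : ∀ x ∈ d.support, x ∈ r.support := fun x hx =>
    r.support_dropUntil_subset hmR hx
  have hq'path : (w2.reverse.append d).IsPath := by
    rw [Walk.isPath_def, Walk.support_append, Walk.support_reverse]
    refine List.Nodup.append ?_ ?_ ?_
    · exact List.nodup_reverse.mpr (Walk.isPath_def _ |>.mp hw2path)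
    · exact (Walk.isPath_def _ |>.mp hdpath).sublist (List.tail_sublist _)
    · intro x hx hx'
      rw [List.mem_reverse] at hx
      have hxd : x ∈ d.support := List.mem_of_mem_tail hx'
      have hxm : x = m := hlast x hx (hdsub x hxd)
      have hcons : d.support = m :: d.support.tail := d.support_eq_cons
      have hnd := Walk.isPath_def _ |>.mp hdpath
      rw [hcons] at hnd
      exact (List.nodup_cons.mp hnd).1 (hxm ▸ hx')
  have := tree_path_unique hT q (w2.reverse.append d) hq hq'path
  refine ⟨m, hm_p, ?_, hmR⟩
  rw [this, Walk.mem_support_append_iff]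
  exact Or.inr d.start_mem_support

lemma wconn_inter {ι : Type*} {T : SimpleGraph ι} (hT : T.IsTree) {A B : Set ι}
    (hA : WConn T A) (hB : WConn T B)
    (hAB : (A ∩ B).Nonempty) : WConn T (A ∩ B) := by
  refine ⟨hAB, ?_⟩
  rintro a ⟨haA, haB⟩ b ⟨hbA, hbB⟩
  obtain ⟨p, hp, hpA⟩ := wconn_path hA haA hbA
  obtain ⟨q, hq, hqB⟩ := wconn_path hB haB hbB
  cases tree_path_unique hT p q hp hq
  exact ⟨p, fun x hx => ⟨hpA x hx, hqB x hx⟩⟩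

lemma helly3 {ι : Type*} {T : SimpleGraph ι} (hT : T.IsTree) {A B C : Set ι}
    (hA : WConn T A) (hB : WConn T B)
    (hC : WConn T C) (hAB : (A ∩ B).Nonempty) (hBC : (B ∩ C).Nonempty)
    (hAC : (A ∩ C).Nonempty) : (A ∩ B ∩ C).Nonempty := by
  obtain ⟨a, haA, haB⟩ := hAB
  obtain ⟨b, hbB, hbC⟩ := hBC
  obtain ⟨c, hcA, hcC⟩ := hAC
  obtain ⟨p, hp, hpB⟩ := wconn_path hB haB hbB
  obtain ⟨q, hq, hqC⟩ := wconn_path hC hbC hcC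
  obtain ⟨r, hr, hrA⟩ := wconn_path hA haA hcA
  obtain ⟨m, hmp, hmq, hmr⟩ := tree_median hT p q r hp hq hr
  exact ⟨m, ⟨hrA m hmr, hpB m hmp⟩, hqC m hmq⟩

lemma tree_helly {ι α : Type*} {T : SimpleGraph ι} (hT : T.IsTree) (s : Finset α)
    (A : α → Set ι)
    (hs : s.Nonempty) (h1 : ∀ a ∈ s, WConn T (A a))
    (h2 : ∀ a ∈ s, ∀ b ∈ s, (A a ∩ A b).Nonempty) :
    ∃ m, ∀ a ∈ s, m ∈ A a := by
  classical
  suffices H : ∀ (s : Finset α) (A : α → Set ι), s.Nonempty → (∀ a ∈ s, WConn T (A a)) →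
      (∀ a ∈ s, ∀ b ∈ s, (A a ∩ A b).Nonempty) → ∃ m, ∀ a ∈ s, m ∈ A a from
    H s A hs h1 h2
  clear hs h1 h2 A s
  intro s
  induction s using Finset.induction_on with
  | empty => intro A hs; exact absurd hs (by simp)
  | @insert a s ha ih =>
    intro A hs h1 h2
    by_cases hse : s.Nonempty
    · have hma : ∀ b ∈ insert a s, (A b ∩ A a).Nonempty := fun b hb =>
        h2 b hb a (Finset.mem_insert_self a s)
      have h1' : ∀ b ∈ s, WConn T (A b ∩ A a) := fun b hb =>
        wconn_inter hT (h1 b (Finset.mem_insert_of_mem hb))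
          (h1 a (Finset.mem_insert_self a s)) (hma b (Finset.mem_insert_of_mem hb))
      have h2' : ∀ b ∈ s, ∀ c ∈ s, ((A b ∩ A a) ∩ (A c ∩ A a)).Nonempty := by
        intro b hb c hc
        have hb' : b ∈ insert a s := Finset.mem_insert_of_mem hb
        have hc' : c ∈ insert a s := Finset.mem_insert_of_mem hc
        have haa := Finset.mem_insert_self a s
        obtain ⟨m, ⟨hmb, hmc⟩, hmA⟩ := helly3 hT (h1 b hb') (h1 c hc')
          (h1 a haa) (h2 b hb' c hc') (h2 c hc' a haa) (h2 b hb' a haa)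
        exact ⟨m, ⟨hmb, hmA⟩, ⟨hmc, hmA⟩⟩
      obtain ⟨m, hm⟩ := ih (fun b => A b ∩ A a) hse h1' h2'
      refine ⟨m, ?_⟩
      intro b hb
      rcases Finset.mem_insert.mp hb with rfl | hb
      · obtain ⟨c, hcs⟩ := hse
        exact (hm c hcs).2
      · exact (hm b hb).1
    · rw [Finset.not_nonempty_iff_eq_empty] at hse
      subst hse
      obtain ⟨⟨m, hm⟩, -⟩ := h1 a (by simp)
      exact ⟨m, by simpa using hm⟩

/-! ### Bridges via separating colorings -/

lemma walk_iff_of_coloring {ι : Type*} {G : SimpleGraph ι} {x y : ι} (F : ι → Prop)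
    (hother : ∀ a b, G.Adj a b → s(a, b) ≠ s(x, y) → (F a ↔ F b)) :
    ∀ {a b : ι} (w : G.Walk a b), s(x, y) ∉ w.edges → (F a ↔ F b) := by
  intro a b w
  induction w with
  | nil => intro _; rfl
  | cons h p ih =>
    intro hmem
    rw [Walk.edges_cons, List.mem_cons] at hmem
    push_neg at hmem
    exact (hother _ _ h (fun hh => hmem.1 hh.symm)).trans (ih hmem.2)

lemma bridge_of_coloring {ι : Type*} {G : SimpleGraph ι} {x y : ι} (h : G.Adj x y)
    (F : ι → Prop) (hsep : ¬(F x ↔ F y))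
    (hother : ∀ a b, G.Adj a b → s(a, b) ≠ s(x, y) → (F a ↔ F b)) :
    G.IsBridge s(x, y) := by
  rw [isBridge_iff]
  refine fun hreach => ?_
  rw [reachable_delete_edges_iff_exists_walk] at hreach
  obtain ⟨p, hp⟩ := hreach
  exact hsep (walk_iff_of_coloring F hother p hp)

lemma coloring_of_bridge {ι : Type*} {G : SimpleGraph ι} {x y : ι} (hb : G.IsBridge s(x, y)) :
    ∃ F : ι → Prop, F x ∧ ¬ F y ∧ ∀ a b, G.Adj a b → s(a, b) ≠ s(x, y) → (F a ↔ F b) := by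
  rw [isBridge_iff] at hb
  refine ⟨fun k => (G \ fromEdgeSet {s(x, y)}).Reachable x k, Reachable.refl x, hb, ?_⟩
  intro a b hab hne
  have hadj : (G \ fromEdgeSet {s(x, y)}).Adj a b := by
    rw [sdiff_adj, fromEdgeSet_adj]
    exact ⟨hab, fun hc => hne hc.1⟩
  exact ⟨fun hr => hr.trans hadj.reachable, fun hr => hr.trans hadj.symm.reachable⟩

/-! ### The glued tree -/

/-- Disjoint copies of the tree `T` indexed by `κ`, glued in a star pattern:
the marked node `g c` of each copy is joined to the marked node `g c₀` of copy `c₀`. -/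
def glueTree {κ ι : Type} (T : SimpleGraph ι) (g : κ → ι) (c₀ : κ) : SimpleGraph (κ × ι) where
  Adj p q := (p.1 = q.1 ∧ T.Adj p.2 q.2) ∨
    (p.1 ≠ q.1 ∧ ((p.1 = c₀ ∧ p.2 = g c₀ ∧ q.2 = g q.1) ∨ (q.1 = c₀ ∧ q.2 = g c₀ ∧ p.2 = g p.1)))
  symm := by
    constructor
    rintro p q (⟨h1, h2⟩ | ⟨h1, h2 | h2⟩)
    · exact Or.inl ⟨h1.symm, h2.symm⟩
    · exact Or.inr ⟨h1.symm, Or.inr h2⟩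
    · exact Or.inr ⟨h1.symm, Or.inl h2⟩
  loopless := by
    constructor
    rintro p (⟨-, h⟩ | ⟨h, -⟩)
    · exact h.ne rfl
    · exact h rfl

/-- Graph homomorphism embedding copy `c` of `T` into the glued tree. -/
def glueTreeCopy {κ ι : Type} (T : SimpleGraph ι) (g : κ → ι) (c₀ : κ) (c : κ) :
    T →g glueTree T g c₀ where
  toFun i := (c, i)
  map_rel' := fun h => Or.inl ⟨rfl, h⟩

lemma glueTree_inter_fields {κ ι : Type} {g : κ → ι} {c₀ : κ}
    {p q : κ × ι}
    (hc : (p.1 = c₀ ∧ p.2 = g c₀ ∧ q.2 = g q.1) ∨ (q.1 = c₀ ∧ q.2 = g c₀ ∧ p.2 = g p.1)) :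
    p.2 = g p.1 ∧ q.2 = g q.1 ∧ (p.1 = c₀ ∨ q.1 = c₀) := by
  rcases hc with ⟨h1, h2, h3⟩ | ⟨h1, h2, h3⟩
  · exact ⟨by rw [h2, h1], h3, Or.inl h1⟩
  · exact ⟨h3, by rw [h2, h1], Or.inr h1⟩

lemma glueTree_isTree {κ ι : Type} [Nonempty κ] {T : SimpleGraph ι} (hT : T.IsTree)
    (g : κ → ι) (c₀ : κ) : (glueTree T g c₀).IsTree := by
  classical
  constructor
  · -- connected
    haveI : Nonempty ι := hT.isConnected.nonempty
    have hcen : ∀ p : κ × ι, (glueTree T g c₀).Reachable p (c₀, g c₀) := by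
      rintro ⟨c, i⟩
      have r1 : (glueTree T g c₀).Reachable (c, i) (c, g c) :=
        Reachable.map (glueTreeCopy T g c₀ c) (hT.isConnected.preconnected i (g c))
      rcases eq_or_ne c c₀ with rfl | hne
      · exact r1
      · exact r1.trans (Adj.reachable (Or.inr ⟨hne, Or.inr ⟨rfl, rfl, rfl⟩⟩))
    exact Connected.mk fun p q => (hcen p).trans (hcen q).symm
  · -- acyclic
    rw [isAcyclic_iff_forall_edge_isBridge]
    have haux : ∀ p q : κ × ι, p.1 ≠ q.1 → q.1 = c₀ → q.2 = g c₀ → p.2 = g p.1 →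
        (glueTree T g c₀).IsBridge s(p, q) := by
      intro p q h1 hq1 hq2 hp2
      have hadjpq : (glueTree T g c₀).Adj p q := Or.inr ⟨h1, Or.inr ⟨hq1, hq2, hp2⟩⟩
      refine bridge_of_coloring hadjpq (fun e => e.1 = p.1) ?_ ?_
      · intro hiff
        exact h1 (hiff.mp rfl).symm
      · rintro e1 e2 (⟨h12, -⟩ | ⟨h12, hc⟩) hne
        · show e1.1 = p.1 ↔ e2.1 = p.1
          rw [h12]
        · obtain ⟨he1, he2, hcen⟩ := glueTree_inter_fields hc
          have hqpair : q = (c₀, g c₀) := Prod.ext hq1 (by rw [hq2])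
          constructor
          · intro hh
            exfalso
            have he1p : e1 = p := Prod.ext hh (by rw [he1, hh, ← hp2])
            have he2c : e2 = q := by
              rcases hcen with hcen | hcen
              · exact absurd (show p.1 = c₀ by rw [← hh]; exact hcen)
                  (fun hpc => h1 (hpc.trans hq1.symm))
              · rw [hqpair]; exact Prod.ext hcen (by rw [he2, hcen])
            exact hne (by rw [he1p, he2c])
          · intro hh
            exfalso
            have he2p : e2 = p := Prod.ext hh (by rw [he2, hh, ← hp2])
            have he1c : e1 = q := by
              rcases hcen with hcen | hcen
              · rw [hqpair]; exact Prod.ext hcen (by rw [he1, hcen])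
              · exact absurd (show p.1 = c₀ by rw [← hh]; exact hcen)
                  (fun hpc => h1 (hpc.trans hq1.symm))
            exact hne (by rw [he2p, he1c, Sym2.eq_swap])
    intro e he
    induction e using Sym2.ind with
    | _ p q =>
    rw [mem_edgeSet] at he
    rcases he with ⟨h1, h2⟩ | ⟨h1, h2⟩
    · -- a copy edge
      obtain ⟨c, i⟩ := p
      obtain ⟨c', j⟩ := q
      dsimp only at h1 h2
      subst h1
      have hbr : T.IsBridge s(i, j) :=
        (isAcyclic_iff_forall_edge_isBridge.mp hT.IsAcyclic) (T.mem_edgeSet.mpr h2)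
      obtain ⟨F0, hF0i, hF0j, hF0pres⟩ := coloring_of_bridge hbr
      refine bridge_of_coloring (Or.inl ⟨rfl, h2⟩)
        (fun e => if e.1 = c then F0 e.2 else F0 (g c)) ?_ ?_
      · simp only [if_pos rfl]
        intro hiff
        exact hF0j (hiff.mp hF0i)
      · rintro ⟨d, k⟩ ⟨d', l⟩ (⟨hdd, hkl⟩ | ⟨hdd, hcase⟩) hne
        · dsimp only at hdd hkl ⊢
          subst hdd
          by_cases hdc : d = c
          · subst hdc
            simp only [if_pos rfl]
            refine hF0pres k l hkl ?_
            intro hklij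
            apply hne
            rw [Sym2.eq_iff] at hklij ⊢
            rcases hklij with ⟨rfl, rfl⟩ | ⟨rfl, rfl⟩
            · exact Or.inl ⟨rfl, rfl⟩
            · exact Or.inr ⟨rfl, rfl⟩
          · simp only [if_neg hdc]
        · obtain ⟨hk, hl, -⟩ := glueTree_inter_fields hcase
          dsimp only at hk hl hdd ⊢
          subst hk
          subst hl
          rcases eq_or_ne d c with rfl | hdc
          · rcases eq_or_ne d' d with rfl | h2'
            · exact absurd rfl hdd
            · simp [h2']
          · rcases eq_or_ne d' c with rfl | h2'
            · simp [hdc]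
            · simp [hdc, h2']
    · -- an inter-copy edge
      rcases h2 with ⟨hc1, hc2, hc3⟩ | ⟨hc1, hc2, hc3⟩
      · rw [Sym2.eq_swap]
        exact haux q p h1.symm hc1 hc2 hc3
      · exact haux p q h1 hc1 hc2 hc3

/-! ### Basic facts about tree decompositions -/

instance treeDecomp_nonempty {W : Type} (G : SimpleGraph W) : Nonempty (TreeDecomp G) := by
  have hacyc : (⊥ : SimpleGraph PUnit.{1}).IsAcyclic := by
    intro v w hw
    cases w with
    | nil => simp [SimpleGraph.Walk.isCycle_def] at hw
    | cons h p => exact absurd h (by simp)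
  have hconn : ∀ (A : Set PUnit.{1}), A.Nonempty →
      ((⊥ : SimpleGraph PUnit).induce A).Connected := by
    intro A hA
    haveI : Nonempty A := hA.to_subtype
    exact ⟨fun a b => by rw [Subsingleton.elim a b]⟩
  exact ⟨⟨PUnit, ⊥, ⟨⟨fun a b => by rw [Subsingleton.elim a b]⟩, hacyc⟩, fun _ => Set.univ,
    fun v => ⟨PUnit.unit, trivial⟩, fun u v _ => ⟨PUnit.unit, trivial, trivial⟩,
    fun v => hconn _ ⟨PUnit.unit, trivial⟩⟩⟩

/-- Transfer a tree decomposition along a subgraph relation. -/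
def TreeDecomp.ofLE {W : Type} {G H : SimpleGraph W} (hGH : G ≤ H) (td : TreeDecomp H) :
    TreeDecomp G where
  ι := td.ι
  tree := td.tree
  isTree := td.isTree
  bag := td.bag
  bag_cover := td.bag_cover
  bag_edge := fun _ _ h => td.bag_edge (hGH h)
  bag_conn := td.bag_conn

lemma treewidth_le_of_forall {W : Type} {G H : SimpleGraph W}
    (h : ∀ td : TreeDecomp H, ∃ td' : TreeDecomp G, td'.width ≤ td.width) :
    treewidth G ≤ treewidth H := by
  refine le_ciInf fun td => ?_
  obtain ⟨td', h'⟩ := h td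
  exact le_trans (ciInf_le (OrderBot.bddBelow _) td') h'

lemma treewidth_mono {W : Type} {G H : SimpleGraph W} (hGH : G ≤ H) :
    treewidth G ≤ treewidth H :=
  treewidth_le_of_forall fun td => ⟨td.ofLE hGH, le_rfl⟩

lemma TreeDecomp.wconn_vertex {W : Type} {G : SimpleGraph W} (td : TreeDecomp G) (v : W) :
    WConn td.tree {i | v ∈ td.bag i} :=
  (induce_connected_iff_wconn _ _).mp (td.bag_conn v)

lemma TreeDecomp.wconn_walk {W : Type} {G : SimpleGraph W} (td : TreeDecomp G) (A : Set W) :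
    ∀ {x y : W} (w : G.Walk x y), (∀ z ∈ w.support, z ∈ A) →
      ∀ i j, x ∈ td.bag i → y ∈ td.bag j →
      ∃ tw : td.tree.Walk i j, ∀ k ∈ tw.support, ∃ z ∈ td.bag k, z ∈ A := by
  intro x y w
  induction w with
  | nil =>
    intro hA i j hi hj
    obtain ⟨w0, hw0⟩ := (td.wconn_vertex _).2 i hi j hj
    exact ⟨w0, fun k hk => ⟨_, hw0 k hk, hA _ (by simp)⟩⟩
  | @cons x x' y h p ih =>
    intro hA i j hi hj
    obtain ⟨k, hk1, hk2⟩ := td.bag_edge h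
    obtain ⟨w1, hw1⟩ := (td.wconn_vertex x).2 i hi k hk1
    obtain ⟨w2, hw2⟩ := ih (fun z hz => hA z (by simp [hz])) k j hk2 hj
    refine ⟨w1.append w2, fun l hl => ?_⟩
    rw [Walk.mem_support_append_iff] at hl
    rcases hl with hl | hl
    · exact ⟨x, hw1 l hl, hA x (by simp)⟩
    · exact hw2 l hl

lemma TreeDecomp.wconn_set {W : Type} {G : SimpleGraph W} (td : TreeDecomp G) {A : Set W}
    (hA : WConn G A) : WConn td.tree {i | ∃ z ∈ td.bag i, z ∈ A} := by
  obtain ⟨⟨a0, ha0⟩, hwalk⟩ := hA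
  obtain ⟨i0, hi0⟩ := td.bag_cover a0
  refine ⟨⟨i0, a0, hi0, ha0⟩, ?_⟩
  rintro i ⟨x, hxi, hxA⟩ j ⟨y, hyj, hyA⟩
  obtain ⟨w, hw⟩ := hwalk x hxA y hyA
  exact td.wconn_walk A w hw i j hxi hyj

/-! ### The key construction -/

lemma exists_glued_decomp {V : Type} [Finite V] (G : SimpleGraph V) (S : Set V)
    (hSne : S.Nonempty) (hScne : (Sᶜ : Set V).Nonempty)
    (hminor : ∀ C : Set V, IsCompAssoc G S C →
      ∃ B : V → Set V,
        (∀ u ∈ S, B u ⊆ (Cᶜ : Set V)) ∧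
        (∀ u ∈ S, SetConnected G (B u)) ∧
        (∀ u ∈ S, u ∈ B u) ∧
        (∀ u ∈ S, ∀ v ∈ S, u ≠ v → Disjoint (B u) (B v)) ∧
        (∀ u ∈ S, ∀ v ∈ S, u ≠ v → ∃ x ∈ B u, ∃ y ∈ B v, G.Adj x y))
    (td : TreeDecomp G) :
    ∃ td' : TreeDecomp (G ⊔ cliqueOn S), td'.width ≤ td.width := by
  classical
  haveI : Nonempty (Sᶜ : Set V) := hScne.to_subtype
  set H : SimpleGraph (Sᶜ : Set V) := G.induce (Sᶜ : Set V) with hH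
  haveI hCompNe : Nonempty H.ConnectedComponent :=
    ⟨H.connectedComponentMk (Classical.arbitrary _)⟩
  set Cset : H.ConnectedComponent → Set V :=
    fun c => Subtype.val '' {x : (Sᶜ : Set V) | H.connectedComponentMk x = c} with hCsetdef
  have mem_Cset : ∀ (v : V) (hv : v ∉ S) (c),
      v ∈ Cset c ↔ H.connectedComponentMk ⟨v, hv⟩ = c := by
    intro v hv c
    constructor
    · rintro ⟨⟨x, hx⟩, hxc, rfl⟩
      exact hxc
    · intro h
      exact ⟨⟨v, hv⟩, h, rfl⟩
  have Cset_disjS : ∀ c, ∀ v ∈ Cset c, v ∉ S := by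
    rintro c v ⟨⟨x, hx⟩, -, rfl⟩
    exact hx
  have mem_Cset_self : ∀ (v : V) (hv : v ∉ S), v ∈ Cset (H.connectedComponentMk ⟨v, hv⟩) :=
    fun v hv => ⟨⟨v, hv⟩, rfl, rfl⟩
  have hcomp : ∀ c, IsCompAssoc G S (Cset c) := by
    intro c
    refine ⟨?_, ?_, ?_⟩
    · rw [SetConnected, induce_connected_iff_wconn]
      constructor
      · obtain ⟨x, hx⟩ := c.exists_rep
        exact ⟨x.1, x, hx, rfl⟩
      · rintro a ⟨x, hx, rfl⟩ b ⟨y, hy, rfl⟩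
        obtain ⟨ω⟩ := (SimpleGraph.ConnectedComponent.eq).mp (hx.trans hy.symm)
        refine ⟨ω.map ⟨Subtype.val, fun h => h⟩, ?_⟩
        intro z hz
        rw [Walk.support_map, List.mem_map] at hz
        obtain ⟨z', hz', rfl⟩ := hz
        refine ⟨z', ?_, rfl⟩
        have hrz : H.Reachable x z' := (ω.takeUntil z' hz').reachable
        show H.connectedComponentMk z' = c
        rw [← hx]
        exact SimpleGraph.ConnectedComponent.eq.mpr hrz.symm
    · rw [Set.disjoint_left]
      intro a ha haS
      exact Cset_disjS c a ha haS
    · rintro v ⟨hvn, u, huC, hadj⟩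
      by_contra hvS
      apply hvn
      obtain ⟨x, hx, rfl⟩ := huC
      have hHadj : H.Adj x ⟨v, hvS⟩ := hadj
      rw [mem_Cset v hvS, ← hx]
      exact SimpleGraph.ConnectedComponent.eq.mpr hHadj.symm.reachable
  choose Bf hB1 hB2 hB3 hB4 hB5 using fun c => hminor (Cset c) (hcomp c)
  have wconn_TS : ∀ c, ∀ u ∈ S, WConn td.tree {i | ∃ z ∈ td.bag i, z ∈ Bf c u} := by
    intro c u hu
    exact td.wconn_set ((induce_connected_iff_wconn _ _).mp (hB2 c u hu))
  have hglue : ∀ c, ∃ i, ∀ u ∈ S, ∃ z ∈ td.bag i, z ∈ Bf c u := by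
    intro c
    have hSfin : S.Finite := Set.toFinite S
    have hpair : ∀ u ∈ hSfin.toFinset, ∀ v ∈ hSfin.toFinset,
        ({i | ∃ z ∈ td.bag i, z ∈ Bf c u} ∩ {i | ∃ z ∈ td.bag i, z ∈ Bf c v}).Nonempty := by
      intro u hu v hv
      rw [Set.Finite.mem_toFinset] at hu hv
      rcases eq_or_ne u v with rfl | hne
      · obtain ⟨i0, hi0⟩ := (wconn_TS c u hu).1
        exact ⟨i0, hi0, hi0⟩
      · obtain ⟨x, hx, y, hy, hxy⟩ := hB5 c u hu v hv hne
        obtain ⟨i, hi1, hi2⟩ := td.bag_edge hxy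
        exact ⟨i, ⟨x, hi1, hx⟩, ⟨y, hi2, hy⟩⟩
    obtain ⟨m, hm⟩ := tree_helly td.isTree hSfin.toFinset
      (fun u => {i | ∃ z ∈ td.bag i, z ∈ Bf c u})
      (by rw [Set.Finite.toFinset_nonempty]; exact hSne)
      (fun u hu => wconn_TS c u (hSfin.mem_toFinset.mp hu)) hpair
    exact ⟨m, fun u hu => hm u (hSfin.mem_toFinset.mpr hu)⟩
  choose g hg using hglue
  obtain ⟨c₀⟩ := id hCompNe
  set Y : H.ConnectedComponent × td.ι → Set V :=
    fun p => (td.bag p.2 ∩ Cset p.1) ∪ {u | u ∈ S ∧ ∃ z ∈ td.bag p.2, z ∈ Bf p.1 u} with hYdef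
  have memY_S : ∀ (u : V), u ∈ S → ∀ c i, (u ∈ Y (c, i) ↔ ∃ z ∈ td.bag i, z ∈ Bf c u) := by
    intro u hu c i
    constructor
    · rintro (⟨-, huC⟩ | ⟨-, h⟩)
      · exact absurd hu (Cset_disjS c u huC)
      · exact h
    · intro h
      exact Or.inr ⟨hu, h⟩
  have memY_nS : ∀ (v : V), v ∉ S → ∀ c i, (v ∈ Y (c, i) ↔ v ∈ td.bag i ∧ v ∈ Cset c) := by
    intro v hv c i
    constructor
    · rintro (⟨h1, h2⟩ | ⟨hvS, -⟩)
      · exact ⟨h1, h2⟩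
      · exact absurd hvS hv
    · intro h
      exact Or.inl h
  have hSsubY : ∀ c, ∀ u ∈ S, u ∈ Y (c, g c) := fun c u hu => Or.inr ⟨hu, hg c u hu⟩
  refine ⟨⟨H.ConnectedComponent × td.ι, glueTree td.tree g c₀,
    glueTree_isTree td.isTree g c₀, Y, ?_, ?_, ?_⟩, ?_⟩
  · -- bag_cover
    intro v
    by_cases hv : v ∈ S
    · exact ⟨(c₀, g c₀), hSsubY c₀ v hv⟩
    · obtain ⟨i, hi⟩ := td.bag_cover v
      exact ⟨(H.connectedComponentMk ⟨v, hv⟩, i), Or.inl ⟨hi, mem_Cset_self v hv⟩⟩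
  · -- bag_edge
    intro u v hadj
    rw [sup_adj] at hadj
    rcases (show G.Adj u v ∨ (u ≠ v ∧ u ∈ S ∧ v ∈ S) from hadj) with hadj | ⟨hne, huS, hvS⟩
    · by_cases huS : u ∈ S <;> by_cases hvS : v ∈ S
      · exact ⟨(c₀, g c₀), hSsubY c₀ u huS, hSsubY c₀ v hvS⟩
      · obtain ⟨i, hiu, hiv⟩ := td.bag_edge hadj
        refine ⟨(H.connectedComponentMk ⟨v, hvS⟩, i), ?_, ?_⟩
        · exact Or.inr ⟨huS, u, hiu, hB3 _ u huS⟩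
        · exact Or.inl ⟨hiv, mem_Cset_self v hvS⟩
      · obtain ⟨i, hiu, hiv⟩ := td.bag_edge hadj
        refine ⟨(H.connectedComponentMk ⟨u, huS⟩, i), ?_, ?_⟩
        · exact Or.inl ⟨hiu, mem_Cset_self u huS⟩
        · exact Or.inr ⟨hvS, v, hiv, hB3 _ v hvS⟩
      · obtain ⟨i, hiu, hiv⟩ := td.bag_edge hadj
        refine ⟨(H.connectedComponentMk ⟨u, huS⟩, i),
          Or.inl ⟨hiu, mem_Cset_self u huS⟩, Or.inl ⟨hiv, ?_⟩⟩
        rw [mem_Cset v hvS]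
        exact SimpleGraph.ConnectedComponent.eq.mpr
          (Adj.reachable (show H.Adj ⟨v, hvS⟩ ⟨u, huS⟩ from hadj.symm))
    · exact ⟨(c₀, g c₀), hSsubY c₀ u huS, hSsubY c₀ v hvS⟩
  · -- bag_conn
    intro v
    rw [induce_connected_iff_wconn]
    by_cases hv : v ∈ S
    · refine ⟨⟨(c₀, g c₀), hSsubY c₀ v hv⟩, ?_⟩
      have hmemM : ∀ c, v ∈ Y (c, g c) := fun c => hSsubY c v hv
      have hwithin : ∀ c (i j : td.ι),
          (∃ z ∈ td.bag i, z ∈ Bf c v) → (∃ z ∈ td.bag j, z ∈ Bf c v) →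
          ∃ w : (glueTree td.tree g c₀).Walk (c, i) (c, j),
            ∀ x ∈ w.support, v ∈ Y x := by
        intro c i j hi hj
        obtain ⟨w0, hw0⟩ := (wconn_TS c v hv).2 i hi j hj
        refine ⟨w0.map (glueTreeCopy td.tree g c₀ c), ?_⟩
        intro x hx
        replace hx : ∃ k ∈ w0.support, glueTreeCopy td.tree g c₀ c k = x :=
          List.mem_map.mp (by rw [← Walk.support_map]; exact hx)
        obtain ⟨k, hk, rfl⟩ := hx
        exact (memY_S v hv c k).mpr (hw0 k hk)
      have hmid : ∀ c d, ∃ w : (glueTree td.tree g c₀).Walk (c, g c) (d, g d),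
          ∀ x ∈ w.support, v ∈ Y x := by
        intro c d
        rcases eq_or_ne c d with rfl | hcd
        · refine ⟨Walk.nil, ?_⟩
          intro x hx
          simp only [Walk.support_nil, List.mem_singleton] at hx
          subst hx
          exact hmemM c
        · rcases eq_or_ne c c₀ with rfl | hc0
          · refine ⟨Walk.cons (Or.inr ⟨hcd, Or.inl ⟨rfl, rfl, rfl⟩⟩) Walk.nil, ?_⟩
            intro x hx
            change x ∈ [_, _] at hx
            simp only [Walk.support_cons, Walk.support_nil, List.mem_cons,
              List.mem_singleton, List.not_mem_nil, or_false] at hx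
            rcases hx with rfl | rfl
            · exact hmemM _
            · exact hmemM _
          · rcases eq_or_ne d c₀ with rfl | hd0
            · refine ⟨Walk.cons (Or.inr ⟨hc0, Or.inr ⟨rfl, rfl, rfl⟩⟩) Walk.nil, ?_⟩
              intro x hx
              change x ∈ [_, _] at hx
              simp only [Walk.support_cons, Walk.support_nil, List.mem_cons,
                List.mem_singleton, List.not_mem_nil, or_false] at hx
              rcases hx with rfl | rfl
              · exact hmemM _
              · exact hmemM _
            · refine ⟨Walk.cons (v := (c₀, g c₀)) (Or.inr ⟨hc0, Or.inr ⟨rfl, rfl, rfl⟩⟩)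
                (Walk.cons (Or.inr ⟨Ne.symm hd0, Or.inl ⟨rfl, rfl, rfl⟩⟩) Walk.nil), ?_⟩
              intro x hx
              change x ∈ [_, _, _] at hx
              simp only [Walk.support_cons, Walk.support_nil, List.mem_cons,
                List.mem_singleton, List.not_mem_nil, or_false] at hx
              rcases hx with rfl | rfl | rfl
              · exact hmemM _
              · exact hmemM _
              · exact hmemM _
      rintro ⟨c, i⟩ hci ⟨d, j⟩ hdj
      rw [Set.mem_setOf_eq] at hci hdj
      have hci' := (memY_S v hv c i).mp hci
      have hdj' := (memY_S v hv d j).mp hdj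
      obtain ⟨w1, hw1⟩ := hwithin c i (g c) hci' (hg c v hv)
      obtain ⟨w2, hw2⟩ := hmid c d
      obtain ⟨w3, hw3⟩ := hwithin d (g d) j (hg d v hv) hdj'
      refine ⟨(w1.append w2).append w3, ?_⟩
      intro x hx
      rw [Walk.mem_support_append_iff] at hx
      rcases hx with hx | hx
      · rw [Walk.mem_support_append_iff] at hx
        rcases hx with hx | hx
        · exact hw1 x hx
        · exact hw2 x hx
      · exact hw3 x hx
    · obtain ⟨i0, hi0⟩ := td.bag_cover v
      refine ⟨⟨(H.connectedComponentMk ⟨v, hv⟩, i0),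
        Or.inl ⟨hi0, mem_Cset_self v hv⟩⟩, ?_⟩
      rintro ⟨c, i⟩ hci ⟨d, j⟩ hdj
      rw [Set.mem_setOf_eq] at hci hdj
      obtain ⟨hvi, hvC⟩ := (memY_nS v hv c i).mp hci
      obtain ⟨hvj, hvD⟩ := (memY_nS v hv d j).mp hdj
      have hcd : c = d := ((mem_Cset v hv c).mp hvC).symm.trans ((mem_Cset v hv d).mp hvD)
      subst hcd
      obtain ⟨w0, hw0⟩ := (td.wconn_vertex v).2 i hvi j hvj
      refine ⟨w0.map (glueTreeCopy td.tree g c₀ c), ?_⟩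
      intro x hx
      replace hx : ∃ k ∈ w0.support, glueTreeCopy td.tree g c₀ c k = x :=
        List.mem_map.mp (by rw [← Walk.support_map]; exact hx)
      obtain ⟨k, hk, rfl⟩ := hx
      exact Or.inl ⟨hw0 k hk, hvC⟩
  · -- width
    show (⨆ p : H.ConnectedComponent × td.ι, (Y p).ncard) - 1 ≤ (⨆ i, (td.bag i).ncard) - 1
    refine Nat.sub_le_sub_right ?_ 1
    have hbdd : BddAbove (Set.range fun i => (td.bag i).ncard) := by
      refine ⟨Nat.card V, ?_⟩
      rintro x ⟨i, rfl⟩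
      rw [← Set.ncard_univ]
      exact Set.ncard_le_ncard (Set.subset_univ _) Set.finite_univ
    haveI : Nonempty td.ι := td.isTree.isConnected.nonempty
    refine ciSup_le ?_
    rintro ⟨c, i⟩
    refine le_trans ?_ (le_ciSup hbdd i)
    have hPval : ∀ w (hw : w ∈ S ∧ ∃ z, z ∈ td.bag i ∧ z ∈ Bf c w),
        (hw.2.choose ∈ td.bag i ∧ hw.2.choose ∈ Bf c w) := fun w hw => hw.2.choose_spec
    set f : V → V := fun v => if h : v ∈ S ∧ ∃ z, z ∈ td.bag i ∧ z ∈ Bf c v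
      then h.2.choose else v with hfdef
    have hfP : ∀ w (hw : w ∈ S ∧ ∃ z, z ∈ td.bag i ∧ z ∈ Bf c w),
        f w ∈ td.bag i ∧ f w ∈ Bf c w := by
      intro w hw
      rw [hfdef]
      dsimp only
      rw [dif_pos hw]
      exact hPval w hw
    have hfnP : ∀ w, ¬(w ∈ S ∧ ∃ z, z ∈ td.bag i ∧ z ∈ Bf c w) → f w = w := by
      intro w hw
      rw [hfdef]
      dsimp only
      rw [dif_neg hw]
    refine Set.ncard_le_ncard_of_injOn f ?_ ?_ (Set.toFinite _)
    · rintro v (⟨hv1, hv2⟩ | ⟨hvS, z, hz1, hz2⟩)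
      · rw [hfnP v (fun h => (Cset_disjS c v hv2) h.1)]
        exact hv1
      · exact (hfP v ⟨hvS, z, hz1, hz2⟩).1
    · intro u hu v hv hfu
      rcases hu with ⟨hu1, hu2⟩ | ⟨huS, zu, hzu1, hzu2⟩
      · rcases hv with ⟨hv1, hv2⟩ | ⟨hvS, zv, hzv1, hzv2⟩
        · have h1 := hfnP u (fun h => Cset_disjS c u hu2 h.1)
          have h2 := hfnP v (fun h => Cset_disjS c v hv2 h.1)
          rw [h1, h2] at hfu
          exact hfu
        · exfalso
          have h1 := hfnP u (fun h => Cset_disjS c u hu2 h.1)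
          have h2 := (hfP v ⟨hvS, zv, hzv1, hzv2⟩).2
          have : u ∈ Bf c v := by rw [← h1, hfu]; exact h2
          exact (hB1 c v hvS this) hu2
      · rcases hv with ⟨hv1, hv2⟩ | ⟨hvS, zv, hzv1, hzv2⟩
        · exfalso
          have h2 := hfnP v (fun h => Cset_disjS c v hv2 h.1)
          have h1 := (hfP u ⟨huS, zu, hzu1, hzu2⟩).2
          have : v ∈ Bf c u := by rw [← h2, ← hfu]; exact h1
          exact (hB1 c u huS this) hv2
        · by_contra hne
          have h1 := (hfP u ⟨huS, zu, hzu1, hzu2⟩).2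
          have h2 := (hfP v ⟨hvS, zv, hzv1, hzv2⟩).2
          have h2' : f u ∈ Bf c v := by rw [hfu]; exact h2
          have hdisj := hB4 c u huS v hvS hne
          rw [Set.disjoint_left] at hdisj
          exact hdisj h1 h2'

end SafeSepAux

/-- If `S` is a separator of `G` such that for every component `C` associated with `S`
the graph induced on the complement of `C` contains a clique on `S` as a labelled minor,
then `S` is safe: completing `S` into a clique does not change the treewidth. -/
theorem minor_safe_separator {V : Type} [Finite V] (G : SimpleGraph V) (S : Set V)
    (hS : Separator G S)
    (hminor : ∀ C : Set V, IsCompAssoc G S C →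
      ∃ B : V → Set V,
        (∀ u ∈ S, B u ⊆ (Cᶜ : Set V)) ∧
        (∀ u ∈ S, SetConnected G (B u)) ∧
        (∀ u ∈ S, u ∈ B u) ∧
        (∀ u ∈ S, ∀ v ∈ S, u ≠ v → Disjoint (B u) (B v)) ∧
        (∀ u ∈ S, ∀ v ∈ S, u ≠ v → ∃ x ∈ B u, ∃ y ∈ B v, G.Adj x y)) :
    treewidth (G ⊔ cliqueOn S) = treewidth G := by
  classical
  have hSne : S.Nonempty := by
    rcases Set.eq_empty_or_nonempty S with rfl | h
    · exact absurd (hS : numComponents G ∅ < numComponents G ∅) (lt_irrefl _)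
    · exact h
  have hScne : (Sᶜ : Set V).Nonempty := by
    rcases Set.eq_empty_or_nonempty (Sᶜ : Set V) with hemp | h
    · exfalso
      haveI hE : IsEmpty (Sᶜ : Set V) := by
        rw [hemp]
        exact Set.isEmpty_coe_sort.mpr rfl
      haveI : IsEmpty ((G.induce (Sᶜ : Set V)).ConnectedComponent) :=
        ⟨fun c => SimpleGraph.ConnectedComponent.ind (fun v => isEmptyElim v) c⟩
      have h0 : numComponents G S = 0 := Nat.card_of_isEmpty
      have h' : numComponents G (∅ : Set V) < numComponents G S := hS
      rw [h0] at h'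
      exact Nat.not_lt_zero _ h'
    · exact h
  refine le_antisymm ?_ (treewidth_mono le_sup_left)
  exact treewidth_le_of_forall (fun td => exists_glued_decomp G S hSne hScne hminor td)

end TW
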